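/- arXiv:2308.12799 — 10 statements merged into one kernel-verified Lean document; each statement's English description precedes it below -/
import Mathlib

section
/- Let τ and σ be π-compatible topologies on a set X. Then a subset A ⊆ X is nowhere dense in (X, τ) if and only if it is nowhere dense in (X, σ). -/
open Topology Set

/-- Topologies `τ` and `σ` on `X` are π-compatible if each is a π-network for the
other: every nonempty open set of either topology contains a nonempty open set of
the other topology. -/
def PiCompatible {X : Type*} (τ σ : TopologicalSpace X) : Prop :=
  (∀ O : Set X, IsOpen[σ] O → O.Nonempty → ∃ V : Set X, IsOpen[τ] V ∧ V.Nonempty ∧ V ⊆ O) ∧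
  (∀ O : Set X, IsOpen[τ] O → O.Nonempty → ∃ V : Set X, IsOpen[σ] V ∧ V.Nonempty ∧ V ⊆ O)

lemma nd_iff_aux {X : Type*} (t : TopologicalSpace X) (A : Set X) :
    @IsNowhereDense X t A ↔
      ∀ U : Set X, IsOpen[t] U → U.Nonempty →
        ∃ V : Set X, IsOpen[t] V ∧ V.Nonempty ∧ V ⊆ U ∧ V ∩ A = ∅ := by
  constructor
  · intro hnd U hU hUne
    refine ⟨U \ closure A, hU.sdiff isClosed_closure, ?_, diff_subset, ?_⟩
    · by_contra hne
      rw [not_nonempty_iff_eq_empty, diff_eq_empty] at hne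
      have : U ⊆ interior (closure A) := hU.subset_interior_iff.mpr hne
      rw [hnd] at this
      exact hUne.ne_empty (subset_empty_iff.mp this)
    · apply eq_empty_of_subset_empty
      rintro x ⟨⟨_, hx2⟩, hx3⟩
      exact hx2 (subset_closure hx3)
  · intro hcond
    rw [IsNowhereDense]
    by_contra hne
    obtain ⟨V, hV, hVne, hVsub, hVA⟩ := hcond (interior (closure A)) isOpen_interior
      (nonempty_iff_ne_empty.mpr hne)
    obtain ⟨x, hx⟩ := hVne
    have hxcl : x ∈ closure A := interior_subset (hVsub hx)
    have : closure A ⊆ Vᶜ := by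
      apply closure_minimal _ hV.isClosed_compl
      intro y hy hyV
      exact Set.eq_empty_iff_forall_notMem.mp hVA y ⟨hyV, hy⟩
    exact this hxcl hx

theorem stmt_5 {X : Type*} (τ σ : TopologicalSpace X) (h : PiCompatible τ σ) :
    ∀ A : Set X, @IsNowhereDense X τ A ↔ @IsNowhereDense X σ A := by
  obtain ⟨h1, h2⟩ := h
  have key : ∀ (t s : TopologicalSpace X),
      (∀ O : Set X, IsOpen[s] O → O.Nonempty → ∃ V : Set X, IsOpen[t] V ∧ V.Nonempty ∧ V ⊆ O) →
      (∀ O : Set X, IsOpen[t] O → O.Nonempty → ∃ V : Set X, IsOpen[s] V ∧ V.Nonempty ∧ V ⊆ O) →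
      ∀ A : Set X, @IsNowhereDense X t A → @IsNowhereDense X s A := by
    intro t s hst hts A hnd
    rw [nd_iff_aux] at hnd ⊢
    intro U hU hUne
    obtain ⟨W, hW, hWne, hWU⟩ := hst U hU hUne
    obtain ⟨V, hV, hVne, hVW, hVA⟩ := hnd W hW hWne
    obtain ⟨V', hV', hV'ne, hV'V⟩ := hts V hV hVne
    exact ⟨V', hV', hV'ne, hV'V.trans (hVW.trans hWU),
      subset_empty_iff.mp (hVA ▸ inter_subset_inter_left A hV'V)⟩
  exact fun A => ⟨key τ σ h1 h2 A, key σ τ h2 h1 A⟩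
end

section
/- Let τ and σ be π-compatible topologies on a set X. Then a subset A ⊆ X is meager in (X, τ) if and only if it is meager in (X, σ). -/
open Topology Set

lemma nwd_char {X : Type*} [TopologicalSpace X] {N : Set X} :
    IsNowhereDense N ↔
      ∀ U : Set X, IsOpen U → U.Nonempty →
        ∃ V : Set X, IsOpen V ∧ V.Nonempty ∧ V ⊆ U ∧ Disjoint V N := by
  constructor
  · intro hN U hU hUne
    have : ¬ U ⊆ closure N := by
      intro hsub
      have : U ⊆ interior (closure N) := hU.subset_interior_iff.mpr hsub
      rw [hN] at this
      exact hUne.not_subset_empty this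
    obtain ⟨x, hxU, hxC⟩ := not_subset.mp this
    refine ⟨U ∩ (closure N)ᶜ, hU.inter isClosed_closure.isOpen_compl, ⟨x, hxU, hxC⟩,
      inter_subset_left, ?_⟩
    exact Set.disjoint_left.mpr fun y hy hyN => hy.2 (subset_closure hyN)
  · intro H
    by_contra hne
    obtain ⟨V, hV, hVne, hVsub, hVd⟩ := H (interior (closure N)) isOpen_interior
      (nonempty_iff_ne_empty.mpr hne)
    obtain ⟨x, hx⟩ := hVne
    have hxc : x ∈ closure N := interior_subset (hVsub hx)
    obtain ⟨y, hyV, hyN⟩ := mem_closure_iff.mp hxc V hV hx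
    exact Set.disjoint_left.mp hVd hyV hyN

lemma nwd_transfer {X : Type*} (τ σ : TopologicalSpace X) (h : PiCompatible τ σ)
    {N : Set X} (hN : @IsNowhereDense X τ N) : @IsNowhereDense X σ N := by
  rw [@nwd_char X σ] at *
  rw [@nwd_char X τ] at hN
  intro U hU hUne
  obtain ⟨V, hV, hVne, hVU⟩ := h.1 U hU hUne
  obtain ⟨W, hW, hWne, hWV, hWd⟩ := hN V hV hVne
  obtain ⟨W', hW', hW'ne, hW'W⟩ := h.2 W hW hWne
  exact ⟨W', hW', hW'ne, hW'W.trans (hWV.trans hVU), hWd.mono_left hW'W⟩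

theorem stmt_6 {X : Type*} (τ σ : TopologicalSpace X) (h : PiCompatible τ σ) :
    ∀ A : Set X, @IsMeagre X τ A ↔ @IsMeagre X σ A := by
  have key : ∀ (τ σ : TopologicalSpace X), PiCompatible τ σ → ∀ A : Set X,
      @IsMeagre X τ A → @IsMeagre X σ A := by
    intro τ σ h A hA
    rw [@isMeagre_iff_countable_union_isNowhereDense X τ] at hA
    rw [@isMeagre_iff_countable_union_isNowhereDense X σ]
    obtain ⟨S, hS, hc, hsub⟩ := hA
    exact ⟨S, fun t ht => nwd_transfer τ σ h (hS t ht), hc, hsub⟩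
  exact fun A => ⟨key τ σ h A, key σ τ ⟨h.2, h.1⟩ A⟩
end

section
/- Let τ and σ be π-compatible topologies on a set X. Then every nonempty τ-open set O can be written as O = V ∪ A, where V is a nonempty σ-open set and A is nowhere dense (equivalently, nowhere dense with respect to either topology); and symmetrically every nonempty σ-open set is the union of a nonempty τ-open set and a nowhere dense set. -/
open Topology Set

lemma pi_compat_aux {X : Type*} (τ σ : TopologicalSpace X)
    (hστ : ∀ O : Set X, IsOpen[σ] O → O.Nonempty → ∃ V : Set X, IsOpen[τ] V ∧ V.Nonempty ∧ V ⊆ O)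
    (hτσ : ∀ O : Set X, IsOpen[τ] O → O.Nonempty → ∃ V : Set X, IsOpen[σ] V ∧ V.Nonempty ∧ V ⊆ O)
    (O : Set X) (hO : IsOpen[τ] O) (hne : O.Nonempty) :
    ∃ V A : Set X, IsOpen[σ] V ∧ V.Nonempty ∧
      @IsNowhereDense X τ A ∧ @IsNowhereDense X σ A ∧ O = V ∪ A := by
  obtain ⟨V0, hV0o, hV0ne, hV0sub⟩ := hτσ O hO hne
  set V : Set X := @interior X σ O with hVdef
  set A : Set X := O \ V with hAdef
  have hVo : IsOpen[σ] V := @isOpen_interior X σ O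
  have hVsub : V ⊆ O := @interior_subset X σ O
  have hVne : V.Nonempty := hV0ne.mono (@interior_maximal X σ O V0 hV0sub hV0o)
  have hAsub : A ⊆ O := diff_subset
  have hAV : ∀ x, x ∈ A → x ∉ V := fun x hx => hx.2
  -- helper: a nonempty σ-open subset of a set contained in O lies in V
  have hsubV : ∀ S : Set X, IsOpen[σ] S → S ⊆ O → S ⊆ V :=
    fun S hS hSO => @interior_maximal X σ O S hSO hS
  refine ⟨V, A, hVo, hVne, ?_, ?_, ?_⟩
  · -- τ-nowhere dense
    show @interior X τ (@closure X τ A) = ∅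
    rw [eq_empty_iff_forall_notMem]
    intro x hx
    set W : Set X := @interior X τ (@closure X τ A) with hWdef
    have hWo : IsOpen[τ] W := @isOpen_interior X τ _
    have hWcl : W ⊆ @closure X τ A := @interior_subset X τ _
    have hWA : (W ∩ A).Nonempty := by
      have := hWcl hx
      rw [@mem_closure_iff X τ _ _] at this
      exact this W hWo hx
    have hWOne : (W ∩ O).Nonempty := hWA.mono (inter_subset_inter_right _ hAsub)
    have hWOo : IsOpen[τ] (W ∩ O) := @IsOpen.inter X τ _ _ hWo hO
    obtain ⟨S, hSo, hSne, hSsub⟩ := hτσ (W ∩ O) hWOo hWOne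
    have hSV : S ⊆ V := hsubV S hSo (hSsub.trans inter_subset_right)
    obtain ⟨T, hTo, hTne, hTsub⟩ := hστ S hSo hSne
    obtain ⟨y, hy⟩ := hTne
    have hycl : y ∈ @closure X τ A := hWcl ((hTsub.trans (hSsub.trans inter_subset_left)) hy)
    rw [@mem_closure_iff X τ _ _] at hycl
    obtain ⟨z, hzT, hzA⟩ := hycl T hTo hy
    exact hAV z hzA (hSV (hTsub hzT))
  · -- σ-nowhere dense
    show @interior X σ (@closure X σ A) = ∅
    rw [eq_empty_iff_forall_notMem]
    intro x hx
    set W : Set X := @interior X σ (@closure X σ A) with hWdef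
    have hWo : IsOpen[σ] W := @isOpen_interior X σ _
    have hWcl : W ⊆ @closure X σ A := @interior_subset X σ _
    have hWne : W.Nonempty := ⟨x, hx⟩
    obtain ⟨T, hTo, hTne, hTsub⟩ := hστ W hWo hWne
    obtain ⟨S1, hS1o, hS1ne, hS1sub⟩ := hτσ T hTo hTne
    obtain ⟨y, hy⟩ := hS1ne
    have hycl : y ∈ @closure X σ A := hWcl (hTsub (hS1sub hy))
    rw [@mem_closure_iff X σ _ _] at hycl
    obtain ⟨z, hzS1, hzA⟩ := hycl S1 hS1o hy
    -- so T meets A ⊆ O, hence T ∩ O is nonempty τ-open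
    have hTOne : (T ∩ O).Nonempty := ⟨z, hS1sub hzS1, hAsub hzA⟩
    have hTOo : IsOpen[τ] (T ∩ O) := @IsOpen.inter X τ _ _ hTo hO
    obtain ⟨S, hSo, hSne, hSsub⟩ := hτσ (T ∩ O) hTOo hTOne
    have hSV : S ⊆ V := hsubV S hSo (hSsub.trans inter_subset_right)
    obtain ⟨w, hw⟩ := hSne
    have hwcl : w ∈ @closure X σ A := hWcl (hTsub ((hSsub.trans inter_subset_left) hw))
    rw [@mem_closure_iff X σ _ _] at hwcl
    obtain ⟨u, huS, huA⟩ := hwcl S hSo hw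
    exact hAV u huA (hSV huS)
  · rw [union_diff_cancel' (fun x hx => hx) hVsub]

/-- If `τ` and `σ` are π-compatible, every nonempty `τ`-open set is the union of a
nonempty `σ`-open set and a set which is nowhere dense (with respect to both
topologies), and vice versa. -/
theorem stmt_7 {X : Type*} (τ σ : TopologicalSpace X) (h : PiCompatible τ σ) :
    (∀ O : Set X, IsOpen[τ] O → O.Nonempty →
      ∃ V A : Set X, IsOpen[σ] V ∧ V.Nonempty ∧
        @IsNowhereDense X τ A ∧ @IsNowhereDense X σ A ∧ O = V ∪ A) ∧
    (∀ O : Set X, IsOpen[σ] O → O.Nonempty →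
      ∃ V A : Set X, IsOpen[τ] V ∧ V.Nonempty ∧
        @IsNowhereDense X τ A ∧ @IsNowhereDense X σ A ∧ O = V ∪ A) := by
  constructor
  · exact pi_compat_aux τ σ h.1 h.2
  · intro O hO hne
    obtain ⟨V, A, h1, h2, h3, h4, h5⟩ := pi_compat_aux σ τ h.2 h.1 O hO hne
    exact ⟨V, A, h1, h2, h4, h3, h5⟩
end

section
/- Let τ and σ be π-compatible topologies on a set X. Then (X, τ) is a Baire space if and only if (X, σ) is a Baire space. -/
open Topology Set

lemma piCompatible_baire {X : Type*} (τ σ : TopologicalSpace X) (h : PiCompatible τ σ)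
    (hb : @BaireSpace X τ) : @BaireSpace X σ := by
  obtain ⟨hστ, hτσ⟩ := h
  constructor
  intro f hfo hfd
  set g : ℕ → Set X := fun n => @interior X τ (f n) with hg
  have hgo : ∀ n, IsOpen[τ] (g n) := fun n => @isOpen_interior X τ (f n)
  have hgd : ∀ n, @Dense X τ (g n) := by
    intro n
    rw [@dense_iff_inter_open X τ _]
    intro U hU hUne
    obtain ⟨V, hVo, hVne, hVU⟩ := hτσ U hU hUne
    have hVf : (V ∩ f n).Nonempty := by
      have hd := hfd n
      rw [@dense_iff_inter_open X σ _] at hd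
      exact hd V hVo hVne
    obtain ⟨W, hWo, hWne, hWsub⟩ :=
      hστ (V ∩ f n) (@IsOpen.inter X σ _ _ hVo (hfo n)) hVf
    obtain ⟨x, hx⟩ := hWne
    refine ⟨x, hVU (hWsub hx).1, ?_⟩
    exact @interior_maximal X τ (f n) W (fun y hy => (hWsub hy).2) hWo x hx
  have hdense := @BaireSpace.baire_property X τ hb g hgo hgd
  have hsub : (⋂ n, g n) ⊆ ⋂ n, f n :=
    Set.iInter_mono fun n => @interior_subset X τ (f n)
  rw [@dense_iff_inter_open X σ _]
  intro U hU hUne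
  obtain ⟨V, hVo, hVne, hVU⟩ := hστ U hU hUne
  rw [@dense_iff_inter_open X τ _] at hdense
  obtain ⟨x, hx⟩ := hdense V hVo hVne
  exact ⟨x, hVU hx.1, hsub hx.2⟩

theorem stmt_9 {X : Type*} (τ σ : TopologicalSpace X) (h : PiCompatible τ σ) :
    @BaireSpace X τ ↔ @BaireSpace X σ :=
  ⟨piCompatible_baire τ σ h, piCompatible_baire σ τ ⟨h.2, h.1⟩⟩
end

section
/- Let τ and σ be π-compatible topologies on a set X, and suppose (X, τ) is a Baire space. Then the family of all nonempty subsets of X that are simultaneously a G_δ-set in (X, τ) and a G_δ-set in (X, σ) is a π-network for (X, τ) and also a π-network for (X, σ): every nonempty τ-open set (respectively, every nonempty σ-open set) contains a nonempty set that is G_δ in both topologies. -/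
open Topology Set

/-- One step of the construction: given a "dense in `O`" family, produce by Zorn's
lemma a maximal pairwise disjoint refining family of pairs. -/
lemma piCompat_step {X : Type*} (τ σ : TopologicalSpace X) (h : PiCompatible τ σ) {O : Set X}
    (F : Set (Set X × Set X))
    (hF1 : ∀ p ∈ F, IsOpen[τ] p.1) (hFO : ∀ p ∈ F, p.1 ⊆ O)
    (hFd : ∀ W, IsOpen[τ] W → W ⊆ O → W.Nonempty → ∃ p ∈ F, (W ∩ p.1).Nonempty) :
    ∃ F' : Set (Set X × Set X),
      ((∀ p ∈ F', IsOpen[τ] p.1) ∧ (∀ p ∈ F', p.1 ⊆ O) ∧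
       (∀ W, IsOpen[τ] W → W ⊆ O → W.Nonempty → ∃ p ∈ F', (W ∩ p.1).Nonempty) ∧
       F'.PairwiseDisjoint Prod.fst) ∧
      (∀ p ∈ F', IsOpen[σ] p.2 ∧ p.1 ⊆ p.2 ∧ ∃ q ∈ F, p.2 ⊆ q.1) := by
  classical
  set Q : Set X × Set X → Prop := fun p =>
    IsOpen[τ] p.1 ∧ IsOpen[σ] p.2 ∧ p.1 ⊆ p.2 ∧ ∃ q ∈ F, p.2 ⊆ q.1 with hQdef
  set S : Set (Set (Set X × Set X)) :=
    {F' | (∀ p ∈ F', Q p) ∧ F'.PairwiseDisjoint Prod.fst} with hSdef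
  obtain ⟨m, hm⟩ := zorn_subset S (by
    intro c hcS hc
    refine ⟨⋃₀ c, ⟨?_, ?_⟩, fun s hs => subset_sUnion_of_mem hs⟩
    · rintro p ⟨t, htc, hpt⟩
      exact (hcS htc).1 p hpt
    · rintro p ⟨t, htc, hpt⟩ q ⟨t', ht'c, hqt'⟩ hpq
      rcases hc.total htc ht'c with hle | hle
      · exact (hcS ht'c).2 (hle hpt) hqt' hpq
      · exact (hcS htc).2 hpt (hle hqt') hpq)
  have hmQ : ∀ p ∈ m, Q p := hm.prop.1
  refine ⟨m, ⟨fun p hp => (hmQ p hp).1, ?_, ?_, hm.prop.2⟩,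
    fun p hp => ⟨(hmQ p hp).2.1, (hmQ p hp).2.2.1, (hmQ p hp).2.2.2⟩⟩
  · intro p hp
    obtain ⟨q, hqF, hsub⟩ := (hmQ p hp).2.2.2
    exact ((hmQ p hp).2.2.1.trans hsub).trans (hFO q hqF)
  · intro W hW hWO hWne
    by_contra hcon
    push_neg at hcon
    have hdisj : ∀ p ∈ m, W ∩ p.1 = ∅ := hcon
    obtain ⟨q, hqF, hWq⟩ := hFd W hW hWO hWne
    obtain ⟨V, hVσ, hVne, hVsub⟩ := h.2 (W ∩ q.1) (by letI := τ; exact hW.inter (hF1 q hqF)) hWq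
    obtain ⟨U, hUτ, hUne, hUsub⟩ := h.1 V hVσ hVne
    have hUW : U ⊆ W := fun y hy => (hVsub (hUsub hy)).1
    have hnew : Q (U, V) := ⟨hUτ, hVσ, hUsub, q, hqF, fun y hy => (hVsub hy).2⟩
    have hins : insert (U, V) m ∈ S := by
      constructor
      · rintro p hp
        rcases hp with rfl | hp
        · exact hnew
        · exact hmQ p hp
      · refine hm.prop.2.insert ?_
        intro p hp _
        refine Set.disjoint_left.2 fun y hyU hyp => ?_
        have : y ∈ W ∩ p.1 := ⟨hUW hyU, hyp⟩
        rw [hdisj p hp] at this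
        exact this
    have : (U, V) ∈ m := hm.2 hins (subset_insert _ _) (mem_insert _ _)
    exact hUne.ne_empty ((Set.inter_eq_right.2 hUW) ▸ hcon (U, V) this)

lemma piCompat_main {X : Type*} (τ σ : TopologicalSpace X) (h : PiCompatible τ σ)
    (hB : @BaireSpace X τ) :
    ∀ O : Set X, IsOpen[τ] O → O.Nonempty →
      ∃ B : Set X, B.Nonempty ∧ @IsGδ X τ B ∧ @IsGδ X σ B ∧ B ⊆ O := by
  intro O hO hOne
  classical
  letI : TopologicalSpace X := τ
  haveI : BaireSpace X := hB
  set Good : Set (Set X × Set X) → Prop := fun F =>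
    (∀ p ∈ F, IsOpen[τ] p.1) ∧ (∀ p ∈ F, p.1 ⊆ O) ∧
    (∀ W, IsOpen[τ] W → W ⊆ O → W.Nonempty → ∃ p ∈ F, (W ∩ p.1).Nonempty) ∧
    F.PairwiseDisjoint Prod.fst with hGooddef
  set Link : Set (Set X × Set X) → Set (Set X × Set X) → Prop := fun F F' =>
    ∀ p ∈ F', IsOpen[σ] p.2 ∧ p.1 ⊆ p.2 ∧ ∃ q ∈ F, p.2 ⊆ q.1 with hLinkdef
  have hseed : Good {(O, O)} := by
    refine ⟨?_, ?_, ?_, Set.pairwiseDisjoint_singleton _ _⟩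
    · rintro p rfl; exact hO
    · rintro p rfl; exact subset_rfl
    · intro W hW hWO hWne
      exact ⟨(O, O), rfl, by rwa [Set.inter_eq_left.2 hWO]⟩
  have hstep : ∀ F : {F // Good F}, ∃ F' : {F // Good F}, Link F.1 F'.1 := by
    rintro ⟨F, hF1, hFO, hFd, hFp⟩
    obtain ⟨F', hg, hl⟩ := piCompat_step τ σ h F hF1 hFO hFd
    exact ⟨⟨F', hg.1, hg.2.1, hg.2.2.1, hg.2.2.2⟩, hl⟩
  choose g hg using hstep
  let Fam : ℕ → {F // Good F} := fun n => Nat.rec ⟨{(O, O)}, hseed⟩ (fun _ s => g s) n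
  have hLink : ∀ n, Link (Fam n).1 (Fam (n + 1)).1 := fun n => hg (Fam n)
  -- dense open sets
  set D : ℕ → Set X := fun n => (⋃ p ∈ (Fam (n + 1)).1, p.1) ∪ (closure O)ᶜ with hDdef
  have hDopen : ∀ n, IsOpen (D n) := by
    intro n
    exact (isOpen_biUnion fun p hp => (Fam (n + 1)).2.1 p hp).union isClosed_closure.isOpen_compl
  have hDdense : ∀ n, Dense (D n) := by
    intro n
    rw [dense_iff_inter_open]
    intro U hU hUne
    by_cases hUO : (U ∩ O).Nonempty
    · obtain ⟨p, hp, y, hy⟩ :=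
        (Fam (n + 1)).2.2.2.1 (U ∩ O) (hU.inter hO) Set.inter_subset_right hUO
      exact ⟨y, hy.1.1, Or.inl (Set.mem_biUnion hp hy.2)⟩
    · have : O ⊆ Uᶜ := fun y hy => fun hyU =>
        hUO ⟨y, hyU, hy⟩
      have hcl : closure O ⊆ Uᶜ := closure_minimal this hU.isClosed_compl
      obtain ⟨y, hy⟩ := hUne
      exact ⟨y, hy, Or.inr fun hycl => hcl hycl hy⟩
  have hdense : Dense (⋂ n, D n) := dense_iInter_of_isOpen hDopen hDdense
  obtain ⟨x, hxO, hxD⟩ := hdense.inter_open_nonempty O hO hOne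
  have hxG : ∀ n, ∃ p ∈ (Fam (n + 1)).1, x ∈ p.1 := by
    intro n
    have hx : x ∈ D n := Set.mem_iInter.1 hxD n
    rcases hx with hx | hx
    · simpa using hx
    · exact absurd (subset_closure hxO) hx
  choose p hpF hxp using hxG
  -- nesting
  have hnest : ∀ n, (p (n + 1)).2 ⊆ (p n).1 := by
    intro n
    obtain ⟨-, hsub12, q, hqF, hsub⟩ := hLink (n + 1) (p (n + 1)) (hpF (n + 1))
    have hq : q = p n := by
      by_contra hne
      exact Set.disjoint_left.1 ((Fam (n + 1)).2.2.2.2 hqF (hpF n) hne)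
        (hsub (hsub12 (hxp (n + 1)))) (hxp n)
    exact hq ▸ hsub
  refine ⟨⋂ n, (p n).1, ⟨x, Set.mem_iInter.2 fun n => hxp n⟩, ?_, ?_, ?_⟩
  · exact IsGδ.iInter_of_isOpen fun n => (Fam (n + 1)).2.1 (p n) (hpF n)
  · have hEq : (⋂ n, (p n).1) = ⋂ n, (p n).2 := by
      apply Set.Subset.antisymm
      · exact Set.iInter_mono fun n => (hLink n (p n) (hpF n)).2.1
      · intro y hy
        exact Set.mem_iInter.2 fun n => hnest n (Set.mem_iInter.1 hy (n + 1))
    rw [hEq]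
    have : @IsGδ X σ (⋂ n, (p n).2) := by
      letI := σ
      exact IsGδ.iInter_of_isOpen fun n => (hLink n (p n) (hpF n)).1
    exact this
  · exact (Set.iInter_subset _ 0).trans ((Fam 1).2.2.1 (p 0) (hpF 0))

/-- If `τ` and `σ` are π-compatible and `(X, τ)` is a Baire space, then the family of
nonempty sets that are `Gδ` in both topologies is a π-network for both `(X, τ)` and
`(X, σ)`. -/
theorem stmt_10 {X : Type*} (τ σ : TopologicalSpace X) (h : PiCompatible τ σ)
    (hB : @BaireSpace X τ) :
    (∀ O : Set X, IsOpen[τ] O → O.Nonempty →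
      ∃ B : Set X, B.Nonempty ∧ @IsGδ X τ B ∧ @IsGδ X σ B ∧ B ⊆ O) ∧
    (∀ O : Set X, IsOpen[σ] O → O.Nonempty →
      ∃ B : Set X, B.Nonempty ∧ @IsGδ X τ B ∧ @IsGδ X σ B ∧ B ⊆ O) := by
  refine ⟨piCompat_main τ σ h hB, ?_⟩
  intro O hOσ hOne
  obtain ⟨W, hWτ, hWne, hWO⟩ := h.1 O hOσ hOne
  obtain ⟨B, hBne, h1, h2, hBW⟩ := piCompat_main τ σ h hB W hWτ hWne
  exact ⟨B, hBne, h1, h2, hBW.trans hWO⟩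
end

section
/- Let {X_α}_{α ∈ A} be a family of sets and, for each α ∈ A, let τ_α and σ_α be π-compatible topologies on X_α. Then the product topology of the topologies τ_α and the product topology of the topologies σ_α are π-compatible topologies on the product set ∏_{α ∈ A} X_α. -/
open Topology Set

lemma piCompatible_aux {ι : Type*} {X : ι → Type*} (τ σ : ∀ i, TopologicalSpace (X i))
    (h : ∀ i, ∀ O : Set (X i), IsOpen[σ i] O → O.Nonempty →
      ∃ V : Set (X i), IsOpen[τ i] V ∧ V.Nonempty ∧ V ⊆ O) :
    ∀ O : Set (∀ i, X i), IsOpen[@Pi.topologicalSpace ι X σ] O → O.Nonempty →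
      ∃ V : Set (∀ i, X i), IsOpen[@Pi.topologicalSpace ι X τ] V ∧ V.Nonempty ∧ V ⊆ O := by
  intro O hO hne
  obtain ⟨x, hx⟩ := hne
  obtain ⟨I, u, hu, hsub⟩ := (@isOpen_pi_iff ι X σ O).mp hO x hx
  choose V hVopen hVne hVsub using
    fun i (hi : i ∈ I) => h i (u i) (hu i hi).1 ⟨x i, (hu i hi).2⟩
  classical
  set w : ∀ i, Set (X i) := fun i => if hi : i ∈ I then V i hi else univ with hw
  refine ⟨(I : Set ι).pi w, ?_, ?_, ?_⟩
  · refine @isOpen_set_pi ι X τ (↑I) w I.finite_toSet (fun a ha => ?_)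
    show IsOpen[τ a] (if hi : a ∈ I then V a hi else univ)
    rw [dif_pos (Finset.mem_coe.mp ha)]
    exact hVopen a (Finset.mem_coe.mp ha)
  · refine ⟨fun i => if hi : i ∈ I then (hVne i hi).choose else x i, fun i hi => ?_⟩
    rw [Finset.mem_coe] at hi
    show (if h' : i ∈ I then (hVne i h').choose else x i) ∈ (if h' : i ∈ I then V i h' else univ)
    rw [dif_pos hi, dif_pos hi]
    exact (hVne i hi).choose_spec
  · intro y hy
    refine hsub (fun i hi => ?_)
    have := hy i hi
    rw [Finset.mem_coe] at hi
    rw [show w i = if h' : i ∈ I then V i h' else univ from rfl, dif_pos hi] at this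
    exact hVsub i hi this

/-- Products of π-compatible topologies are π-compatible. -/
theorem stmt_12 {ι : Type*} {X : ι → Type*} (τ σ : ∀ i, TopologicalSpace (X i))
    (h : ∀ i, PiCompatible (τ i) (σ i)) :
    PiCompatible (@Pi.topologicalSpace ι X τ) (@Pi.topologicalSpace ι X σ) := by
  exact ⟨piCompatible_aux τ σ (fun i => (h i).1), piCompatible_aux σ τ (fun i => (h i).2)⟩
end

section
/- Let τ_i and σ_i be π-compatible topologies on a set X_i for each i ≤ n (a finite family). Then the finite product ∏_{i=1}^n (X_i, τ_i) is a Baire space if and only if ∏_{i=1}^n (X_i, σ_i) is a Baire space. -/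
open Topology Set

/-- a τ-dense set is σ-dense when every nonempty σ-open set contains a nonempty τ-open set. -/
lemma dense_transfer {X : Type*} {τ σ : TopologicalSpace X}
    (hn : ∀ O : Set X, IsOpen[σ] O → O.Nonempty → ∃ V : Set X, IsOpen[τ] V ∧ V.Nonempty ∧ V ⊆ O)
    {S : Set X} (hS : @Dense X τ S) : @Dense X σ S := by
  rw [@dense_iff_inter_open] at hS ⊢
  intro U hU hUne
  obtain ⟨V, hVopen, hVne, hVU⟩ := hn U hU hUne
  obtain ⟨x, hx⟩ := hS V hVopen hVne
  exact ⟨x, hVU hx.1, hx.2⟩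

lemma baire_transfer {X : Type*} {τ σ : TopologicalSpace X}
    (h : PiCompatible τ σ) (hb : @BaireSpace X τ) : @BaireSpace X σ := by
  constructor
  intro D hDopen hDdense
  set E : ℕ → Set X := fun k => @interior X τ (D k) with hE
  have hEopen : ∀ k, IsOpen[τ] (E k) := fun k => @isOpen_interior X τ (D k)
  have hEdense : ∀ k, @Dense X τ (E k) := by
    intro k
    rw [@dense_iff_inter_open]
    intro U hU hUne
    obtain ⟨V, hVopen, hVne, hVU⟩ := h.2 U hU hUne
    have hVD : IsOpen[σ] (V ∩ D k) := @IsOpen.inter X σ V (D k) hVopen (hDopen k)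
    have hVDne : (V ∩ D k).Nonempty := by
      letI := σ; exact dense_iff_inter_open.1 (hDdense k) V hVopen hVne
    obtain ⟨W, hWopen, hWne, hWsub⟩ := h.1 (V ∩ D k) hVD hVDne
    obtain ⟨x, hx⟩ := hWne
    refine ⟨x, hVU (hWsub hx).1, ?_⟩
    letI := τ
    exact interior_maximal (fun y hy => (hWsub hy).2) hWopen hx
  have hdense : @Dense X τ (⋂ k, E k) := hb.1 E hEopen hEdense
  have hsub : (⋂ k, E k) ⊆ ⋂ k, D k :=
    Set.iInter_mono fun k => @interior_subset X τ (D k)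
  letI := τ
  exact dense_transfer h.1 (Dense.mono hsub hdense)

lemma pi_net_prod {n : ℕ} {X : Fin n → Type*} (τ σ : ∀ i, TopologicalSpace (X i))
    (h : ∀ i, ∀ O : Set (X i), IsOpen[σ i] O → O.Nonempty →
      ∃ V : Set (X i), IsOpen[τ i] V ∧ V.Nonempty ∧ V ⊆ O) :
    ∀ O : Set (∀ i, X i), IsOpen[@Pi.topologicalSpace (Fin n) X σ] O → O.Nonempty →
      ∃ V : Set (∀ i, X i), IsOpen[@Pi.topologicalSpace (Fin n) X τ] V ∧ V.Nonempty ∧ V ⊆ O := by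
  intro O hO hOne
  obtain ⟨f, hf⟩ := hOne
  obtain ⟨I, u, hu, hsub⟩ := (@isOpen_pi_iff (Fin n) X σ O).1 hO f hf
  -- extend u to all coordinates
  classical
  set U : ∀ i, Set (X i) := fun i => if hi : i ∈ I then u i else Set.univ with hU
  have hUopen : ∀ i, IsOpen[σ i] (U i) := by
    intro i
    by_cases hi : i ∈ I
    · simpa [hU, hi] using (hu i hi).1
    · simp [hU, hi]
  have hUne : ∀ i, (U i).Nonempty := by
    intro i
    by_cases hi : i ∈ I
    · exact ⟨f i, by simpa [hU, hi] using (hu i hi).2⟩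
    · exact ⟨f i, by simp [hU, hi]⟩
  choose W hWopen hWne hWsub using fun i => h i (U i) (hUopen i) (hUne i)
  refine ⟨Set.pi Set.univ W, ?_, ?_, ?_⟩
  · exact @isOpen_set_pi (Fin n) X τ Set.univ W (Set.finite_univ) (fun i _ => hWopen i)
  · exact Set.univ_pi_nonempty_iff.2 hWne
  · intro x hx
    apply hsub
    intro i hi
    have h1 : x i ∈ U i := hWsub i (hx i (Set.mem_univ i))
    simp only [hU] at h1
    rwa [dif_pos (Finset.mem_coe.1 hi)] at h1

/-- For a finite family of pairs of π-compatible topologies, the product with the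
`τ`-topologies is a Baire space iff the product with the `σ`-topologies is. -/
theorem stmt_13 {n : ℕ} {X : Fin n → Type*} (τ σ : ∀ i, TopologicalSpace (X i))
    (h : ∀ i, PiCompatible (τ i) (σ i)) :
    @BaireSpace (∀ i, X i) (@Pi.topologicalSpace (Fin n) X τ) ↔
      @BaireSpace (∀ i, X i) (@Pi.topologicalSpace (Fin n) X σ) := by
  have hcomp : PiCompatible (@Pi.topologicalSpace (Fin n) X τ)
      (@Pi.topologicalSpace (Fin n) X σ) :=
    ⟨pi_net_prod τ σ (fun i => (h i).1), pi_net_prod σ τ (fun i => (h i).2)⟩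
  exact ⟨baire_transfer hcomp, baire_transfer ⟨hcomp.2, hcomp.1⟩⟩
end

section
/- Let τ and σ be topologies on a set X such that σ is an admissible extension of τ. Then every nonempty σ-open set O is semi-open in (X, τ): there exists a τ-open set V with V ⊆ O ⊆ Cl_τ(V), where Cl_τ denotes closure in (X, τ). -/
open Topology Set

/-- `AdmissibleExtension σ τ` means: the topology `σ` on `X` is an admissible
extension of the topology `τ` on `X`, i.e. `τ ⊆ σ` and every nonempty `σ`-open set
contains a nonempty `τ`-open set. -/
def AdmissibleExtension {X : Type*} (σ τ : TopologicalSpace X) : Prop :=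
  (∀ s : Set X, IsOpen[τ] s → IsOpen[σ] s) ∧
  (∀ O : Set X, IsOpen[σ] O → O.Nonempty → ∃ V : Set X, IsOpen[τ] V ∧ V.Nonempty ∧ V ⊆ O)

/-- If `σ` is an admissible extension of `τ`, then every nonempty `σ`-open set `O`
is semi-open in `(X, τ)`: there is a `τ`-open `V` with `V ⊆ O ⊆ Cl_τ V`. -/
theorem stmt_14 {X : Type*} (τ σ : TopologicalSpace X) (h : AdmissibleExtension σ τ) :
    ∀ O : Set X, IsOpen[σ] O → O.Nonempty →
      ∃ V : Set X, IsOpen[τ] V ∧ V ⊆ O ∧ O ⊆ @closure X τ V := by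
  intro O hO hOne
  set V := @interior X τ O with hV
  refine ⟨V, @isOpen_interior X τ O, @interior_subset X τ O, ?_⟩
  intro x hx
  by_contra hxc
  have hclosed : IsOpen[τ] (@closure X τ V)ᶜ :=
    (@isClosed_closure X τ V).isOpen_compl
  have hopen : IsOpen[σ] (O ∩ (@closure X τ V)ᶜ) :=
    @IsOpen.inter X σ O _ hO (h.1 _ hclosed)
  have hne : (O ∩ (@closure X τ V)ᶜ).Nonempty := ⟨x, hx, hxc⟩
  obtain ⟨W, hWopen, hWne, hWsub⟩ := h.2 _ hopen hne
  have hWV : W ⊆ V := by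
    exact @interior_maximal X τ O W (hWsub.trans inter_subset_left) hWopen
  obtain ⟨y, hy⟩ := hWne
  exact (hWsub hy).2 (@subset_closure X τ V _ (hWV hy))
end

section
/- For subsets A, B ⊆ ℝ, the Hattori topology τ(B) on ℝ is an admissible extension of the Hattori topology τ(A) if and only if B ⊆ A. -/
open Topology Set

/-- The Hattori topology `τ(A)` on `ℝ`: generated by all open intervals `(a, b)`
together with all half-open intervals `[x, b)` with `x ∉ A` and `x < b`. -/
def hattori (A : Set ℝ) : TopologicalSpace ℝ :=
  TopologicalSpace.generateFrom
    ({S : Set ℝ | ∃ a b : ℝ, S = Set.Ioo a b} ∪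
      {S : Set ℝ | ∃ x b : ℝ, x ∉ A ∧ x < b ∧ S = Set.Ico x b})

/-- The generating family of the Hattori topology. -/
def hgen (A : Set ℝ) : Set (Set ℝ) :=
  {S : Set ℝ | ∃ a b : ℝ, S = Set.Ioo a b} ∪
    {S : Set ℝ | ∃ x b : ℝ, x ∉ A ∧ x < b ∧ S = Set.Ico x b}

lemma hgen_aux {C : Set ℝ} {t : Set ℝ} {x : ℝ} (ht : t ∈ hgen C) (hx : x ∈ t) :
    ∃ c b : ℝ, c ≤ x ∧ x < b ∧ Set.Ico c b ⊆ t ∧ (c < x ∨ c ∉ C) := by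
  rcases ht with ⟨a, b, rfl⟩ | ⟨c, b, hc, hcb, rfl⟩
  · refine ⟨(a + x) / 2, b, by linarith [hx.1], hx.2, ?_, Or.inl (by linarith [hx.1])⟩
    intro y hy
    exact ⟨by linarith [hx.1, hy.1], hy.2⟩
  · exact ⟨c, b, hx.1, hx.2, subset_rfl, Or.inr hc⟩

lemma hattori_basis (C : Set ℝ) :
    @TopologicalSpace.IsTopologicalBasis ℝ (hattori C) (hgen C) := by
  letI : TopologicalSpace ℝ := hattori C
  refine ⟨?_, ?_, rfl⟩
  · rintro t₁ ht₁ t₂ ht₂ x ⟨hx₁, hx₂⟩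
    obtain ⟨c₁, b₁, hc₁x, hxb₁, hsub₁, hor₁⟩ := hgen_aux ht₁ hx₁
    obtain ⟨c₂, b₂, hc₂x, hxb₂, hsub₂, hor₂⟩ := hgen_aux ht₂ hx₂
    set c := max c₁ c₂ with hc
    set b := min b₁ b₂ with hb
    have hcx : c ≤ x := max_le hc₁x hc₂x
    have hxb : x < b := lt_min hxb₁ hxb₂
    have hsub : Set.Ico c b ⊆ t₁ ∩ t₂ := by
      intro y hy
      exact ⟨hsub₁ ⟨le_trans (le_max_left _ _) hy.1, lt_of_lt_of_le hy.2 (min_le_left _ _)⟩,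
        hsub₂ ⟨le_trans (le_max_right _ _) hy.1, lt_of_lt_of_le hy.2 (min_le_right _ _)⟩⟩
    by_cases hlt : c < x
    · exact ⟨Set.Ioo c b, Or.inl ⟨c, b, rfl⟩, ⟨hlt, hxb⟩,
        fun y hy => hsub ⟨le_of_lt hy.1, hy.2⟩⟩
    · have hcx' : c = x := le_antisymm hcx (not_lt.mp hlt)
      have hcC : c ∉ C := by
        have hce : c = c₁ ∨ c = c₂ := by
          rw [hc]
          rcases le_total c₁ c₂ with h | h
          exacts [Or.inr (max_eq_right h), Or.inl (max_eq_left h)]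
        rcases hce with he | he
        · rcases hor₁ with h | h
          · exact absurd (by rw [he]; exact h) hlt
          · rw [he]; exact h
        · rcases hor₂ with h | h
          · exact absurd (by rw [he]; exact h) hlt
          · rw [he]; exact h
      exact ⟨Set.Ico c b, Or.inr ⟨c, b, hcC, hcx' ▸ hxb, rfl⟩, ⟨hcx, hxb⟩, hsub⟩
  · apply Set.eq_univ_of_forall
    intro x
    exact ⟨Set.Ioo (x - 1) (x + 1), Or.inl ⟨x - 1, x + 1, rfl⟩, by constructor <;> linarith⟩

lemma hattori_open_iff (C O : Set ℝ) :
    IsOpen[hattori C] O ↔ ∀ x ∈ O, ∃ v ∈ hgen C, x ∈ v ∧ v ⊆ O := by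
  letI : TopologicalSpace ℝ := hattori C
  exact (hattori_basis C).isOpen_iff

theorem stmt_18 (A B : Set ℝ) :
    AdmissibleExtension (hattori B) (hattori A) ↔ B ⊆ A := by
  constructor
  · rintro ⟨h₁, _⟩ x hxB
    by_contra hxA
    have hopen : IsOpen[hattori A] (Set.Ico x (x + 1)) :=
      TopologicalSpace.GenerateOpen.basic _ (Or.inr ⟨x, x + 1, hxA, by linarith, rfl⟩)
    have hopen' : IsOpen[hattori B] (Set.Ico x (x + 1)) := h₁ _ hopen
    obtain ⟨v, hv, hxv, hvsub⟩ :=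
      ((hattori_open_iff B _).mp hopen') x ⟨le_refl x, by linarith⟩
    rcases hv with ⟨a, b, rfl⟩ | ⟨c, b, hcB, hcb, rfl⟩
    · have := hvsub (show (a + x) / 2 ∈ Set.Ioo a b from
        ⟨by linarith [hxv.1], by linarith [hxv.1, hxv.2]⟩)
      have := this.1
      linarith [hxv.1]
    · have hcx : c < x := lt_of_le_of_ne hxv.1 (fun h => hcB (h ▸ hxB))
      have := hvsub (show (c + x) / 2 ∈ Set.Ico c b from
        ⟨by linarith, by linarith [hxv.2]⟩)
      have := this.1
      linarith
  · intro hBA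
    constructor
    · intro s hs
      have hsub : hgen A ⊆ hgen B := by
        rintro t (⟨a, b, rfl⟩ | ⟨c, b, hc, hcb, rfl⟩)
        · exact Or.inl ⟨a, b, rfl⟩
        · exact Or.inr ⟨c, b, fun h => hc (hBA h), hcb, rfl⟩
      exact TopologicalSpace.generateFrom_anti hsub _ hs
    · intro O hO ⟨x, hxO⟩
      obtain ⟨v, hv, hxv, hvsub⟩ := ((hattori_open_iff B _).mp hO) x hxO
      rcases hv with ⟨a, b, rfl⟩ | ⟨c, b, hcB, hcb, rfl⟩
      · exact ⟨Set.Ioo a b, TopologicalSpace.GenerateOpen.basic _ (Or.inl ⟨a, b, rfl⟩),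
          ⟨x, hxv⟩, hvsub⟩
      · refine ⟨Set.Ioo c b, TopologicalSpace.GenerateOpen.basic _ (Or.inl ⟨c, b, rfl⟩),
          ⟨(c + b) / 2, by constructor <;> linarith⟩, fun y hy => hvsub ⟨le_of_lt hy.1, hy.2⟩⟩
end

section
/- For every proper subset A ⊊ ℝ, the Hattori space H(A) = (ℝ, τ(A)) is a disconnected topological space. -/
open Topology Set

/-- For every proper subset `A ⊊ ℝ`, the Hattori space `H(A) = (ℝ, τ(A))` is
disconnected. -/
theorem stmt_19 (A : Set ℝ) (hA : A ≠ Set.univ) :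
    ¬ @ConnectedSpace ℝ (hattori A) := by
  obtain ⟨x, hx⟩ : ∃ x, x ∉ A := by
    by_contra h
    push_neg at h
    exact hA (Set.eq_univ_of_forall h)
  letI := hattori A
  intro h
  have hU : IsOpen (Set.Iio x) := by
    have heq : Set.Iio x = ⋃ a : ℝ, Set.Ioo a x := by
      ext y
      simp only [Set.mem_iUnion, Set.mem_Ioo, Set.mem_Iio]
      constructor
      · intro hy; exact ⟨y - 1, by linarith, hy⟩
      · rintro ⟨a, _, hy⟩; exact hy
    rw [heq]
    exact isOpen_iUnion fun a =>
      TopologicalSpace.GenerateOpen.basic _ (Or.inl ⟨a, x, rfl⟩)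
  have hV : IsOpen (Set.Ici x) := by
    have heq : Set.Ici x = ⋃ n : ℕ, Set.Ico x (x + n + 1) := by
      ext y
      simp only [Set.mem_iUnion, Set.mem_Ico, Set.mem_Ici]
      constructor
      · intro hy
        obtain ⟨n, hn⟩ := exists_nat_gt (y - x)
        exact ⟨n, hy, by linarith⟩
      · rintro ⟨n, hy, _⟩; exact hy
    rw [heq]
    refine isOpen_iUnion fun n =>
      TopologicalSpace.GenerateOpen.basic _ (Or.inr ⟨x, x + n + 1, hx, ?_, rfl⟩)
    have : (0 : ℝ) ≤ n := n.cast_nonneg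
    linarith
  have hpc : IsPreconnected (Set.univ : Set ℝ) := isPreconnected_univ
  have hne := hpc (Set.Iio x) (Set.Ici x) hU hV
    (by intro y _; rcases lt_or_ge y x with h' | h'
        · exact Or.inl h'
        · exact Or.inr h')
    ⟨x - 1, trivial, by simp⟩ ⟨x, trivial, le_refl x⟩
  obtain ⟨y, -, hy1, hy2⟩ := hne
  exact absurd (show y < x from hy1) (not_lt.mpr hy2)
end
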